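/- Let G be a 2K_3-free graph in which every edge lies in a triangle, with a triangle {u,v,w} such that every edge of G - {u,v,w} forms a triangle only with u (never with v or w), and suppose G - {u,v,w} has at least one edge. Then no vertex of G - {u,v,w} forms a triangle with both v and w; consequently all triangles of G contain the vertex u. -/
import Mathlib


/-- Let G be 2K_3-free and K_4-free, with every edge in a triangle, and a
triangle {u,v,w} such that every edge of G - {u,v,w} forms a triangle only with u (never
with v or w), and G - {u,v,w} has at least one edge. Then no vertex of G - {u,v,w} forms
a triangle with both v and w; consequently every triangle of G contains u. -/
theorem stmt18 {V : Type*} [DecidableEq V] (G : SimpleGraph V) (u v w : V)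
    (h2K3 : ¬ ∃ s t : Finset V, G.IsNClique 3 s ∧ G.IsNClique 3 t ∧ Disjoint s t)
    (hK4 : G.CliqueFree 4)
    (hedge : ∀ x y : V, G.Adj x y → ∃ z : V, G.Adj x z ∧ G.Adj y z)
    (htri : G.Adj u v ∧ G.Adj v w ∧ G.Adj u w)
    (honlyu : ∀ a b : V, a ∉ ({u, v, w} : Set V) → b ∉ ({u, v, w} : Set V) → G.Adj a b →
      ¬ (G.Adj a v ∧ G.Adj b v) ∧ ¬ (G.Adj a w ∧ G.Adj b w))
    (hasEdge : ∃ a b : V, a ∉ ({u, v, w} : Set V) ∧ b ∉ ({u, v, w} : Set V) ∧ G.Adj a b) :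
    (∀ x : V, x ∉ ({u, v, w} : Set V) → ¬ (G.Adj x v ∧ G.Adj x w)) ∧
    (∀ s : Finset V, G.IsNClique 3 s → u ∈ s) := by
  obtain ⟨huv, hvw, huw⟩ := htri
  have Tuvw : G.IsNClique 3 ({u, v, w} : Finset V) := by
    rw [SimpleGraph.is3Clique_triple_iff]; exact ⟨huv, huw, hvw⟩
  -- key: both ends of an outside edge are adjacent to u
  have key : ∀ a b : V, a ∉ ({u, v, w} : Set V) → b ∉ ({u, v, w} : Set V) → G.Adj a b →
      G.Adj u a ∧ G.Adj u b := by
    intro a b ha hb hab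
    obtain ⟨z, haz, hbz⟩ := hedge a b hab
    have hon := honlyu a b ha hb hab
    have hzv : z ≠ v := by rintro rfl; exact hon.1 ⟨haz, hbz⟩
    have hzw : z ≠ w := by rintro rfl; exact hon.2 ⟨haz, hbz⟩
    by_cases hzu : z = u
    · subst hzu; exact ⟨haz.symm, hbz.symm⟩
    · exfalso
      apply h2K3
      refine ⟨{a, b, z}, {u, v, w}, ?_, Tuvw, ?_⟩
      · rw [SimpleGraph.is3Clique_triple_iff]; exact ⟨hab, haz, hbz⟩
      · simp only [Set.mem_insert_iff, Set.mem_singleton_iff, not_or] at ha hb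
        rw [Finset.disjoint_left]
        intro x hx hx'
        simp only [Finset.mem_insert, Finset.mem_singleton] at hx hx'
        rcases hx with rfl | rfl | rfl <;> rcases hx' with rfl | rfl | rfl <;>
          first
          | exact ha.1 rfl | exact ha.2.1 rfl | exact ha.2.2 rfl
          | exact hb.1 rfl | exact hb.2.1 rfl | exact hb.2.2 rfl
          | exact hzu rfl | exact hzv rfl | exact hzw rfl
  have P1 : ∀ x : V, x ∉ ({u, v, w} : Set V) → ¬ (G.Adj x v ∧ G.Adj x w) := by
    rintro x hx ⟨hxv, hxw⟩
    simp only [Set.mem_insert_iff, Set.mem_singleton_iff, not_or] at hx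
    obtain ⟨hxu, hxv', hxw'⟩ := hx
    obtain ⟨a, b, ha, hb, hab⟩ := hasEdge
    obtain ⟨hua, hub⟩ := key a b ha hb hab
    by_cases hxab : x = a ∨ x = b
    · -- x adjacent to u : K4 on {x,u,v,w}
      have hux : G.Adj u x := by rcases hxab with rfl | rfl; exacts [hua, hub]
      apply hK4 (insert x {u, v, w})
      refine Tuvw.insert ?_
      intro y hy
      simp only [Finset.mem_insert, Finset.mem_singleton] at hy
      rcases hy with rfl | rfl | rfl
      · exact hux.symm
      · exact hxv
      · exact hxw
    · push_neg at hxab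
      apply h2K3
      refine ⟨{a, b, u}, {x, v, w}, ?_, ?_, ?_⟩
      · rw [SimpleGraph.is3Clique_triple_iff]; exact ⟨hab, hua.symm, hub.symm⟩
      · rw [SimpleGraph.is3Clique_triple_iff]; exact ⟨hxv, hxw, hvw⟩
      · simp only [Set.mem_insert_iff, Set.mem_singleton_iff, not_or] at ha hb
        rw [Finset.disjoint_left]
        intro y hy hy'
        simp only [Finset.mem_insert, Finset.mem_singleton] at hy hy'
        rcases hy with rfl | rfl | rfl <;> rcases hy' with rfl | rfl | rfl <;>
          first
          | exact ha.1 rfl | exact ha.2.1 rfl | exact ha.2.2 rfl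
          | exact hb.1 rfl | exact hb.2.1 rfl | exact hb.2.2 rfl
          | exact hxab.1 rfl | exact hxab.2 rfl
          | exact hxu rfl | exact hxv' rfl | exact hxw' rfl
          | exact huv.ne rfl | exact huw.ne rfl
  refine ⟨P1, ?_⟩
  intro s hs
  rw [SimpleGraph.is3Clique_iff] at hs
  obtain ⟨p, q, r, hpq, hpr, hqr, rfl⟩ := hs
  by_contra hus
  simp only [Finset.mem_insert, Finset.mem_singleton, not_or] at hus
  obtain ⟨hpu, hqu, hru⟩ := hus
  -- helper to close cases with an outside-edge contradiction
  have notmem : ∀ x : V, x ≠ u → x ≠ v → x ≠ w → x ∉ ({u, v, w} : Set V) := by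
    intro x h1 h2 h3; simp [h1, h2, h3]
  by_cases hvp : v = p ∨ v = q ∨ v = r
  · by_cases hwp : w = p ∨ w = q ∨ w = r
    · -- both v and w in triangle: third vertex x adj to both
      rcases hvp with rfl | rfl | rfl <;> rcases hwp with rfl | rfl | rfl <;>
        first
        | exact (G.irrefl hvw).elim
        | exact P1 r (notmem r (Ne.symm hru) hpr.ne' hqr.ne') ⟨hpr.symm, hqr.symm⟩
        | exact P1 r (notmem r (Ne.symm hru) hqr.ne' hpr.ne') ⟨hqr.symm, hpr.symm⟩
        | exact P1 q (notmem q (Ne.symm hqu) hpq.ne' hqr.ne) ⟨hpq.symm, hqr⟩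
        | exact P1 q (notmem q (Ne.symm hqu) hqr.ne hpq.ne') ⟨hqr, hpq.symm⟩
        | exact P1 p (notmem p (Ne.symm hpu) hpq.ne hpr.ne) ⟨hpq, hpr⟩
        | exact P1 p (notmem p (Ne.symm hpu) hpr.ne hpq.ne) ⟨hpr, hpq⟩
    · -- v in triangle, w not: other two vertices give outside edge adj to v
      push_neg at hwp
      rcases hvp with rfl | rfl | rfl
      · exact (honlyu q r (notmem q (Ne.symm hqu) hpq.ne' (Ne.symm hwp.2.1))
          (notmem r (Ne.symm hru) hpr.ne' (Ne.symm hwp.2.2)) hqr).1 ⟨hpq.symm, hpr.symm⟩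
      · exact (honlyu p r (notmem p (Ne.symm hpu) hpq.ne (Ne.symm hwp.1))
          (notmem r (Ne.symm hru) hqr.ne' (Ne.symm hwp.2.2)) hpr).1 ⟨hpq, hqr.symm⟩
      · exact (honlyu p q (notmem p (Ne.symm hpu) hpr.ne (Ne.symm hwp.1))
          (notmem q (Ne.symm hqu) hqr.ne (Ne.symm hwp.2.1)) hpq).1 ⟨hpr, hqr⟩
  · push_neg at hvp
    by_cases hwp : w = p ∨ w = q ∨ w = r
    · rcases hwp with rfl | rfl | rfl
      · exact (honlyu q r (notmem q (Ne.symm hqu) (Ne.symm hvp.2.1) hpq.ne')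
          (notmem r (Ne.symm hru) (Ne.symm hvp.2.2) hpr.ne') hqr).2 ⟨hpq.symm, hpr.symm⟩
      · exact (honlyu p r (notmem p (Ne.symm hpu) (Ne.symm hvp.1) hpq.ne)
          (notmem r (Ne.symm hru) (Ne.symm hvp.2.2) hqr.ne') hpr).2 ⟨hpq, hqr.symm⟩
      · exact (honlyu p q (notmem p (Ne.symm hpu) (Ne.symm hvp.1) hpr.ne)
          (notmem q (Ne.symm hqu) (Ne.symm hvp.2.1) hqr.ne) hpq).2 ⟨hpr, hqr⟩
    · push_neg at hwp
      apply h2K3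
      refine ⟨{p, q, r}, {u, v, w}, ?_, Tuvw, ?_⟩
      · rw [SimpleGraph.is3Clique_triple_iff]; exact ⟨hpq, hpr, hqr⟩
      · rw [Finset.disjoint_left]
        intro y hy hy'
        simp only [Finset.mem_insert, Finset.mem_singleton] at hy hy'
        rcases hy with rfl | rfl | rfl <;> rcases hy' with rfl | rfl | rfl <;>
          first
          | exact hpu rfl | exact hqu rfl | exact hru rfl
          | exact hvp.1 rfl | exact hvp.2.1 rfl | exact hvp.2.2 rfl
          | exact hwp.1 rfl | exact hwp.2.1 rfl | exact hwp.2.2 rfl
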